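/- Let α be a finite type and let σ, τ be permutations of α. Let π be the permutation of α ⊕ α defined by π(inl x) = inr (σ x) and π(inr y) = inl (τ y). Then every cycle of π has even length, and the cycle type of π equals the multiset obtained by doubling every entry of the cycle type of τ∘σ, together with one cycle of length 2 for each fixed point of τ∘σ: cycleType(π) = map (ℓ ↦ 2ℓ) (cycleType(τ∘σ)) + replicate (number of fixed points of τ∘σ) 2. -/

import Mathlib

set_option linter.unusedSectionVars false

open Equiv Equiv.Perm Finset

namespace SwapBlockAux

variable {α : Type*} [Fintype α] [DecidableEq α]

/-- The permutation of `α ⊕ α` that, on the support of `f` (doubled), sends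
`inl x ↦ inr x` and `inr y ↦ inl (f y)`, and fixes everything else. -/
def theta (f : Equiv.Perm α) : Equiv.Perm (α ⊕ α) where
  toFun := Sum.elim (fun x => if f x = x then .inl x else .inr x)
                    (fun y => if f y = y then .inr y else .inl (f y))
  invFun := Sum.elim (fun x => if f x = x then .inl x else .inr (f⁻¹ x))
                     (fun y => if f y = y then .inr y else .inl y)
  left_inv := by
    rintro (x | y) <;> simp only [Sum.elim_inl, Sum.elim_inr]
    · split_ifs with h <;> simp [h]
    · split_ifs with h
      · simp [h]
      · have h2 : ¬ f (f y) = f y := fun hc => h (f.injective hc)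
        simp [h2]
  right_inv := by
    rintro (x | y) <;> simp only [Sum.elim_inl, Sum.elim_inr]
    · split_ifs with h
      · simp [h]
      · have h2 : ¬ f (f⁻¹ x) = f⁻¹ x := by
          rw [Equiv.Perm.coe_inv, Equiv.apply_symm_apply]
          intro hc
          exact h ((congrArg f hc).trans (f.apply_symm_apply x))
        have h3 : ¬ x = f⁻¹ x := fun hc => h ((congrArg f hc).trans (f.apply_symm_apply x))
        simp [h2, h3]
        exact h3
    · split_ifs with h <;> simp [h]

lemma theta_apply_inl (f : Equiv.Perm α) (x : α) :
    theta f (.inl x) = if f x = x then .inl x else .inr x := rfl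

lemma theta_apply_inr (f : Equiv.Perm α) (y : α) :
    theta f (.inr y) = if f y = y then .inr y else .inl (f y) := rfl

lemma support_theta (f : Equiv.Perm α) :
    (theta f).support = f.support.map ⟨Sum.inl, Sum.inl_injective⟩ ∪
      f.support.map ⟨Sum.inr, Sum.inr_injective⟩ := by
  ext b
  rcases b with x | y
  · by_cases h : f x = x <;>
      simp [Equiv.Perm.mem_support, theta_apply_inl, h]
  · by_cases h : f y = y <;>
      simp [Equiv.Perm.mem_support, theta_apply_inr, h]

lemma card_support_theta (f : Equiv.Perm α) :
    (theta f).support.card = 2 * f.support.card := by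
  rw [support_theta, Finset.card_union_of_disjoint, Finset.card_map, Finset.card_map]
  · ring
  · simp [Finset.disjoint_left]

lemma theta_sq (f : Equiv.Perm α) :
    theta f * theta f = Equiv.sumCongr f f := by
  ext b
  rcases b with x | y
  · by_cases h : f x = x
    · simp [Equiv.Perm.mul_apply, theta_apply_inl, theta_apply_inr, h]
    · simp [Equiv.Perm.mul_apply, theta_apply_inl, theta_apply_inr, h]
  · by_cases h : f y = y
    · simp [Equiv.Perm.mul_apply, theta_apply_inl, theta_apply_inr, h]
    · have h2 : ¬ f (f y) = f y := fun hc => h (f.injective hc)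
      simp [Equiv.Perm.mul_apply, theta_apply_inl, theta_apply_inr, h, h2]

lemma theta_zpow (f : Equiv.Perm α) (n : ℤ) (x : α) :
    ((theta f) ^ (2 * n)) (.inl x) = .inl ((f ^ n) x) := by
  have h1 : (theta f) ^ (2 * n) = ((theta f) ^ (2 : ℤ)) ^ n := by
    rw [← zpow_mul]
  have h2 : (theta f) ^ (2 : ℤ) = Equiv.Perm.sumCongrHom α α (f, f) := by
    rw [zpow_two, theta_sq, Equiv.Perm.sumCongrHom_apply]
  rw [h1, h2, ← map_zpow, Equiv.Perm.sumCongrHom_apply]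
  simp

lemma theta_isCycle {f : Equiv.Perm α} (hf : f.IsCycle) : (theta f).IsCycle := by
  obtain ⟨x, hx, hsc⟩ := hf
  refine ⟨.inl x, by simp [theta_apply_inl, hx], ?_⟩
  rintro (y | y) hy
  · have hy' : f y ≠ y := by
      intro h; apply hy; simp [theta_apply_inl, h]
    obtain ⟨n, hn⟩ := hsc hy'
    exact ⟨2 * n, by rw [theta_zpow, hn]⟩
  · have hy' : f y ≠ y := by
      intro h; apply hy; simp [theta_apply_inr, h]
    obtain ⟨n, hn⟩ := hsc hy'
    refine ⟨2 * n + 1, ?_⟩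
    rw [add_comm, zpow_add, zpow_one, Equiv.Perm.mul_apply]
    · rw [theta_zpow, hn, theta_apply_inl, if_neg hy']

lemma theta_one : theta (1 : Equiv.Perm α) = 1 := by
  ext b
  rcases b with x | y <;> simp [theta_apply_inl, theta_apply_inr]

lemma disjoint_theta {f g : Equiv.Perm α} (h : f.Disjoint g) :
    (theta f).Disjoint (theta g) := by
  intro b
  rcases b with x | y
  · rcases h x with h' | h'
    · exact Or.inl (by simp [theta_apply_inl, h'])
    · exact Or.inr (by simp [theta_apply_inl, h'])
  · rcases h y with h' | h'
    · exact Or.inl (by simp [theta_apply_inr, h'])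
    · exact Or.inr (by simp [theta_apply_inr, h'])

lemma theta_mul {f g : Equiv.Perm α} (h : f.Disjoint g) :
    theta (f * g) = theta f * theta g := by
  ext b
  rcases b with x | y
  · rcases h x with h' | h'
    · by_cases hg : g x = x
      · have : f (g x) = x := by rw [hg, h']
        simp [Equiv.Perm.mul_apply, theta_apply_inl, theta_apply_inr, hg, h', this]
      · have hfg : f (g x) = g x := by
          rcases h (g x) with h'' | h''
          · exact h''
          · exact absurd (g.injective h'') hg
        have : f (g x) ≠ x := by rw [hfg]; exact hg
        simp [Equiv.Perm.mul_apply, theta_apply_inl, theta_apply_inr, hg, h', this]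
    · -- g x = x
      by_cases hf : f x = x
      · have : f (g x) = x := by rw [h', hf]
        simp [Equiv.Perm.mul_apply, theta_apply_inl, theta_apply_inr, h', hf, this]
      · have : f (g x) ≠ x := by rw [h']; exact hf
        simp [Equiv.Perm.mul_apply, theta_apply_inl, theta_apply_inr, h', hf, this]
  · rcases h y with h' | h'
    · by_cases hg : g y = y
      · have : f (g y) = y := by rw [hg, h']
        simp [Equiv.Perm.mul_apply, theta_apply_inl, theta_apply_inr, hg, h', this]
      · have hfg : f (g y) = g y := by
          rcases h (g y) with h'' | h''
          · exact h''
          · exact absurd (g.injective h'') hg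
        have h3 : f (g y) ≠ y := by rw [hfg]; exact hg
        simp [Equiv.Perm.mul_apply, theta_apply_inl, theta_apply_inr, hg, h', h3, hfg]
    · by_cases hf : f y = y
      · have : f (g y) = y := by rw [h', hf]
        simp [Equiv.Perm.mul_apply, theta_apply_inl, theta_apply_inr, h', hf, this]
      · have : f (g y) ≠ y := by rw [h']; exact hf
        simp [Equiv.Perm.mul_apply, theta_apply_inl, theta_apply_inr, h', hf, this]

lemma cycleType_theta (ρ : Equiv.Perm α) :
    (theta ρ).cycleType = ρ.cycleType.map (fun ℓ => 2 * ℓ) := by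
  induction ρ using Equiv.Perm.cycle_induction_on with
  | base_one => simp [theta_one]
  | base_cycles f hf =>
      rw [hf.cycleType, (theta_isCycle hf).cycleType, card_support_theta]
      simp
  | induction_disjoint f g hd hc hf hg =>
      rw [theta_mul hd, Equiv.Perm.Disjoint.cycleType_mul (disjoint_theta hd), hd.cycleType_mul,
        Multiset.map_add, hf, hg]

/-- The involution of `α ⊕ α` swapping `inl x` and `inr x` for each fixed point `x` of `f`. -/
def fpswap (f : Equiv.Perm α) : Equiv.Perm (α ⊕ α) where
  toFun := Sum.elim (fun x => if f x = x then .inr x else .inl x)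
                    (fun y => if f y = y then .inl y else .inr y)
  invFun := Sum.elim (fun x => if f x = x then .inr x else .inl x)
                     (fun y => if f y = y then .inl y else .inr y)
  left_inv := by
    rintro (x | y) <;> simp only [Sum.elim_inl, Sum.elim_inr] <;>
      split_ifs with h <;> simp [h]
  right_inv := by
    rintro (x | y) <;> simp only [Sum.elim_inl, Sum.elim_inr] <;>
      split_ifs with h <;> simp [h]

lemma fpswap_apply_inl (f : Equiv.Perm α) (x : α) :
    fpswap f (.inl x) = if f x = x then .inr x else .inl x := rfl

lemma fpswap_apply_inr (f : Equiv.Perm α) (y : α) :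
    fpswap f (.inr y) = if f y = y then .inl y else .inr y := rfl

lemma fpswap_sq (f : Equiv.Perm α) : fpswap f ^ 2 = 1 := by
  rw [sq]
  ext b
  rcases b with x | y
  · by_cases h : f x = x <;>
      simp [Equiv.Perm.mul_apply, fpswap_apply_inl, fpswap_apply_inr, h]
  · by_cases h : f y = y <;>
      simp [Equiv.Perm.mul_apply, fpswap_apply_inl, fpswap_apply_inr, h]

lemma support_fpswap (f : Equiv.Perm α) :
    (fpswap f).support =
      (Finset.univ.filter fun x : α => f x = x).map ⟨Sum.inl, Sum.inl_injective⟩ ∪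
      (Finset.univ.filter fun x : α => f x = x).map ⟨Sum.inr, Sum.inr_injective⟩ := by
  ext b
  rcases b with x | y
  · by_cases h : f x = x <;>
      simp [Equiv.Perm.mem_support, fpswap_apply_inl, h]
  · by_cases h : f y = y <;>
      simp [Equiv.Perm.mem_support, fpswap_apply_inr, h]

lemma card_support_fpswap (f : Equiv.Perm α) :
    (fpswap f).support.card = 2 * (Finset.univ.filter fun x : α => f x = x).card := by
  rw [support_fpswap, Finset.card_union_of_disjoint, Finset.card_map, Finset.card_map]
  · ring
  · simp [Finset.disjoint_left]

lemma cycleType_fpswap (f : Equiv.Perm α) :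
    (fpswap f).cycleType =
      Multiset.replicate (Finset.univ.filter fun x : α => f x = x).card 2 := by
  have h2 : ∀ n ∈ (fpswap f).cycleType, n = 2 := by
    intro n hn
    have hle : 2 ≤ n := Equiv.Perm.two_le_of_mem_cycleType hn
    have hdvd : n ∣ 2 := by
      have h1 : n ∣ (fpswap f).cycleType.lcm := Multiset.dvd_lcm hn
      rw [Equiv.Perm.lcm_cycleType] at h1
      exact h1.trans (orderOf_dvd_of_pow_eq_one (fpswap_sq f))
    have := Nat.le_of_dvd (by norm_num) hdvd
    omega
  have hrep : (fpswap f).cycleType =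
      Multiset.replicate (Multiset.card (fpswap f).cycleType) 2 :=
    Multiset.eq_replicate_card.2 h2
  have hsum : (fpswap f).cycleType.sum = 2 * (Finset.univ.filter fun x : α => f x = x).card := by
    rw [Equiv.Perm.sum_cycleType, card_support_fpswap]
  rw [hrep] at hsum ⊢
  rw [Multiset.sum_replicate, smul_eq_mul] at hsum
  congr 1
  omega

lemma disjoint_theta_fpswap (f : Equiv.Perm α) : (theta f).Disjoint (fpswap f) := by
  intro b
  rcases b with x | y
  · by_cases h : f x = x
    · exact Or.inl (by simp [theta_apply_inl, h])
    · exact Or.inr (by simp [fpswap_apply_inl, h])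
  · by_cases h : f y = y
    · exact Or.inl (by simp [theta_apply_inr, h])
    · exact Or.inr (by simp [fpswap_apply_inr, h])

end SwapBlockAux

open SwapBlockAux in
/-- If `π` is the permutation of `α ⊕ α` sending `inl x ↦ inr (σ x)` and
`inr y ↦ inl (τ y)`, then every cycle of `π` has even length, and the cycle type of `π`
is obtained by doubling every entry of the cycle type of `τ ∘ σ` and adding one `2`-cycle
for each fixed point of `τ ∘ σ`. -/
theorem swap_block_perm_cycleType {α : Type*} [Fintype α] [DecidableEq α]
    (σ τ : Equiv.Perm α) (π : Equiv.Perm (α ⊕ α))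
    (hl : ∀ x : α, π (Sum.inl x) = Sum.inr (σ x))
    (hr : ∀ y : α, π (Sum.inr y) = Sum.inl (τ y)) :
    (∀ ℓ ∈ π.cycleType, Even ℓ) ∧
    π.cycleType = ((τ * σ).cycleType.map fun ℓ => 2 * ℓ) +
      Multiset.replicate (Finset.univ.filter fun x : α => (τ * σ) x = x).card 2 := by
  set ρ : Equiv.Perm α := τ * σ with hρ
  set c : Equiv.Perm (α ⊕ α) := Equiv.sumCongr (1 : Equiv.Perm α) σ with hc
  have hconj : c⁻¹ * π * c = theta ρ * fpswap ρ := by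
    ext b
    rcases b with x | y
    · have hL : (c⁻¹ * π * c) (Sum.inl x) = Sum.inr x := by
        simp [hc, Equiv.Perm.mul_apply, hl, Equiv.Perm.inv_def]
      have hR : (theta ρ * fpswap ρ) (Sum.inl x) = Sum.inr x := by
        by_cases h : ρ x = x <;>
          simp [Equiv.Perm.mul_apply, theta_apply_inl, theta_apply_inr,
            fpswap_apply_inl, h]
      rw [hL, hR]
    · have hL : (c⁻¹ * π * c) (Sum.inr y) = Sum.inl (ρ y) := by
        simp [hc, hρ, Equiv.Perm.mul_apply, hr, Equiv.Perm.inv_def,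
          Equiv.Perm.mul_apply, Equiv.Perm.one_symm]
      have hR : (theta ρ * fpswap ρ) (Sum.inr y) = Sum.inl (ρ y) := by
        by_cases h : ρ y = y
        · simp [Equiv.Perm.mul_apply, theta_apply_inl, fpswap_apply_inr, h]
        · simp [Equiv.Perm.mul_apply, theta_apply_inr, fpswap_apply_inr, h]
      rw [hL, hR]
  have hct : π.cycleType = (theta ρ * fpswap ρ).cycleType := by
    rw [← hconj]
    have : c⁻¹ * π * c = c⁻¹ * π * (c⁻¹)⁻¹ := by rw [inv_inv]
    rw [this, Equiv.Perm.cycleType_conj]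
  have hmain : π.cycleType = (ρ.cycleType.map fun ℓ => 2 * ℓ) +
      Multiset.replicate (Finset.univ.filter fun x : α => ρ x = x).card 2 := by
    rw [hct, Equiv.Perm.Disjoint.cycleType_mul (disjoint_theta_fpswap ρ), cycleType_theta, cycleType_fpswap]
  refine ⟨?_, hmain⟩
  intro ℓ hℓ
  rw [hmain] at hℓ
  rcases Multiset.mem_add.1 hℓ with h | h
  · obtain ⟨a, _, rfl⟩ := Multiset.mem_map.1 h
    exact ⟨a, (two_mul a).symm ▸ rfl⟩
  · rw [Multiset.eq_of_mem_replicate h]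
    exact even_two
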